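/- Let R be a commutative ring with 1 + 1 = 0, let (A, ω) be a curved associative algebra over R, let ι be a finite index set, and let ξ : ι × ι → A satisfy the curvature equation: for all i, j ∈ ι, ∑_{ℓ∈ι} ξ_{iℓ} · ξ_{ℓj} equals ω if i = j and 0 otherwise. Then for every m ≥ 1 and all i, j ∈ ι, the following identity holds in the m-fold tensor power A^{⊗m}: the sum, over all sequences i = k₀, k₁, …, k_{m+1} = j in ι and all positions 1 ≤ p ≤ m, of the tensors ξ_{k₀k₁} ⊗ … ⊗ ξ_{k_{p−2}k_{p−1}} ⊗ (ξ_{k_{p−1}k_p} · ξ_{k_p k_{p+1}}) ⊗ ξ_{k_{p+1}k_{p+2}} ⊗ … ⊗ ξ_{k_m k_{m+1}} (m tensor factors, obtained from an (m+1)-factor path tensor by multiplying the two adjacent factors at position p) equals the sum, over all sequences i = ℓ₀, ℓ₁, …, ℓ_{m−1} = j in ι and all positions 0 ≤ q ≤ m−1, of the tensors ℓ-path tensors ξ_{ℓ₀ℓ₁} ⊗ … ⊗ ξ_{ℓ_{q−1}ℓ_q} ⊗ ω ⊗ ξ_{ℓ_q ℓ_{q+1}} ⊗ … ⊗ ξ_{ℓ_{m−2}ℓ_{m−1}}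 (m tensor factors, obtained from an (m−1)-factor path tensor by inserting ω in position q). -/
import Mathlib


open TensorProduct Finset

noncomputable section

variable (R : Type) [CommRing R]

/-- `TS R A m` is the `(m+1)`-fold tensor power `A^{⊗(m+1)}`,
nested as `A ⊗ (A ⊗ (⋯ ⊗ A))`. -/
def TS (A : Type) [Ring A] [Algebra R A] : ℕ → ModuleCat R
  | 0 => ModuleCat.of R A
  | m + 1 => ModuleCat.of R (A ⊗[R] ↥(TS A m))

/-- The pure tensor `f 0 ⊗ f 1 ⊗ ⋯ ⊗ f m` in `TS R A m` (an `(m+1)`-factor tensor). -/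
def pureT (A : Type) [Ring A] [Algebra R A] (f : ℕ → A) : (m : ℕ) → ↥(TS R A m)
  | 0 => f 0
  | m + 1 => f 0 ⊗ₜ[R] pureT A (fun i => f (i + 1)) m

section Aux
variable {R}
variable {A : Type} [Ring A] [Algebra R A]

theorem pureT_congr : ∀ (m : ℕ) {f g : ℕ → A}, (∀ t, t ≤ m → f t = g t) →
    pureT R A f m = pureT R A g m
  | 0, f, g, h => by
      show (f 0 : A) = g 0
      exact h 0 le_rfl
  | m+1, f, g, h => by
      show f 0 ⊗ₜ[R] pureT R A (fun i => f (i+1)) m = g 0 ⊗ₜ[R] pureT R A (fun i => g (i+1)) m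
      rw [h 0 (Nat.zero_le _), pureT_congr m (fun t ht => h (t+1) (by omega))]

theorem pureT_eq_zero : ∀ (m s : ℕ), s ≤ m → ∀ {f : ℕ → A}, f s = 0 → pureT R A f m = 0
  | 0, s, hs, f, h => by
      interval_cases s
      show (f 0 : A) = 0
      exact h
  | m+1, 0, hs, f, h => by
      show f 0 ⊗ₜ[R] pureT R A (fun i => f (i+1)) m = 0
      rw [h, TensorProduct.zero_tmul]
  | m+1, s+1, hs, f, h => by
      show f 0 ⊗ₜ[R] pureT R A (fun i => f (i+1)) m = 0
      rw [pureT_eq_zero m s (by omega) h, TensorProduct.tmul_zero]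

theorem pureT_sum {α : Type} (s : Finset α) :
    ∀ (m p : ℕ), p ≤ m → ∀ (g : ℕ → A) (F : α → A),
    ∑ a ∈ s, pureT R A (Function.update g p (F a)) m
      = pureT R A (Function.update g p (∑ a ∈ s, F a)) m
  | 0, p, hp, g, F => by
      interval_cases p
      show ∑ a ∈ s, (Function.update g 0 (F a) 0 : A) = Function.update g 0 (∑ a ∈ s, F a) 0
      simp
  | m+1, 0, hp, g, F => by
      have hc : ∀ x : A, pureT R A (fun i => Function.update g 0 x (i+1)) m
          = pureT R A (fun i => g (i+1)) m := fun x =>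
        pureT_congr m (fun t ht => by simp [Function.update])
      show ∑ a ∈ s, (Function.update g 0 (F a) 0) ⊗ₜ[R] pureT R A (fun i => Function.update g 0 (F a) (i+1)) m
        = (Function.update g 0 (∑ a ∈ s, F a) 0) ⊗ₜ[R] pureT R A (fun i => Function.update g 0 (∑ a ∈ s, F a) (i+1)) m
      simp only [hc, Function.update_self]
      rw [TensorProduct.sum_tmul]
  | m+1, p+1, hp, g, F => by
      have hc : ∀ x : A, (fun i => Function.update g (p+1) x (i+1))
          = Function.update (fun t => g (t+1)) p x := by
        intro x
        funext t
        rcases eq_or_ne t p with rfl | h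
        · simp
        · simp [Function.update, h]
      show ∑ a ∈ s, (Function.update g (p+1) (F a) 0) ⊗ₜ[R] pureT R A (fun i => Function.update g (p+1) (F a) (i+1)) m
        = (Function.update g (p+1) (∑ a ∈ s, F a) 0) ⊗ₜ[R] pureT R A (fun i => Function.update g (p+1) (∑ a ∈ s, F a) (i+1)) m
      simp only [hc, Function.update_of_ne (Nat.succ_ne_zero p).symm]
      rw [← TensorProduct.tmul_sum, pureT_sum s m p (by omega)]

def backF (n p : ℕ) {ι : Type} (l : Fin (n+1) → ι) (b a : ι) : Fin (n+3) → ι := fun t =>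
  if (t:ℕ) ≤ p then l ⟨min (t:ℕ) n, by omega⟩
  else if (t:ℕ) = p+1 then a
  else if (t:ℕ) = p+2 then b
  else l ⟨(t:ℕ)-2, by have := t.isLt; omega⟩

def foreF (n p : ℕ) {ι : Type} (k : Fin (n+3) → ι) : (Fin (n+1) → ι) × ι × ι :=
  (fun t => if (t:ℕ) ≤ p then k ⟨(t:ℕ), by have := t.isLt; omega⟩
            else k ⟨(t:ℕ)+2, by have := t.isLt; omega⟩,
   k ⟨min (p+2) (n+2), by omega⟩, k ⟨min (p+1) (n+2), by omega⟩)

theorem back_fore (n p : ℕ) (hp : p ≤ n) {ι : Type} (k : Fin (n+3) → ι) :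
    (fun x : (Fin (n+1) → ι) × ι × ι => backF n p x.1 x.2.1 x.2.2) (foreF n p k) = k := by
  funext t
  have ht := t.isLt
  simp only [backF, foreF]
  split_ifs with h1 h2 h3 h4 <;>
    first
      | (exact absurd (by omega) (by assumption))
      | (congr 1; exact Fin.ext (by simp only [Fin.val_mk]; omega))

theorem fore_back (n p : ℕ) (hp : p ≤ n) {ι : Type} (x : (Fin (n+1) → ι) × ι × ι) :
    foreF n p (backF n p x.1 x.2.1 x.2.2) = x := by
  obtain ⟨l, b, a⟩ := x
  simp only [foreF, backF]
  refine Prod.ext ?_ (Prod.ext ?_ ?_)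
  · funext t
    have ht := t.isLt
    simp only [Fin.val_mk]
    split_ifs with h1 h2 h3 h4 h5 h6 h7 <;>
      first
        | omega
        | rfl
        | (congr 1; exact Fin.ext (by simp only [Fin.val_mk]; omega))
  · simp only [Fin.val_mk]
    split_ifs <;> first | omega | rfl
  · simp only [Fin.val_mk]
    split_ifs <;> first | omega | rfl

def backE (n p : ℕ) (hp : p ≤ n) (ι : Type) : ((Fin (n+1) → ι) × ι × ι) ≃ (Fin (n+3) → ι) where
  toFun := fun x => backF n p x.1 x.2.1 x.2.2
  invFun := foreF n p
  left_inv := fun x => fore_back n p hp x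
  right_inv := fun k => back_fore n p hp k


def Lf (n : ℕ) {ι : Type} (l : Fin (n+1) → ι) (i : ι) : ℕ → ι :=
  fun t => if h : t < n+1 then l ⟨t, h⟩ else i

def Kf (n p : ℕ) {ι : Type} (l : Fin (n+1) → ι) (b a i : ι) : ℕ → ι :=
  fun t => if h : t < n+3 then backF n p l b a ⟨t, h⟩ else i

def Gf (n p : ℕ) {ι A : Type} [Ring A] (l : Fin (n+1) → ι) (b i : ι) (ξ : ι → ι → A) : ℕ → A :=
  fun r => if r < p then ξ (Lf n l i r) (Lf n l i (r+1))
    else if r = p then 0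
    else if r = p+1 then ξ b (Lf n l i (p+1))
    else ξ (Lf n l i (r-1)) (Lf n l i r)

theorem Kf_eq (n p : ℕ) (hp : p ≤ n) {ι : Type} (l : Fin (n+1) → ι) (b a i : ι)
    (t : ℕ) (ht : t ≤ n+2) :
    Kf n p l b a i t = if t ≤ p then Lf n l i t
      else if t = p+1 then a else if t = p+2 then b else Lf n l i (t-2) := by
  unfold Kf backF Lf
  rw [dif_pos (show t < n+3 by omega)]
  simp only [Fin.val_mk]
  split_ifs with h1 h2 h3 h4 h5 h6 <;>
    first
      | rfl
      | omega
      | (congr 1; exact Fin.ext (by simp only [Fin.val_mk]; omega))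

theorem slot_eq (n p : ℕ) (hp : p ≤ n) {ι A : Type} [Ring A]
    (l : Fin (n+1) → ι) (b a i : ι) (ξ : ι → ι → A) (t : ℕ) (ht : t ≤ n) :
    (if t < p then ξ (Kf n p l b a i t) (Kf n p l b a i (t+1))
     else if t = p then
       ξ (Kf n p l b a i p) (Kf n p l b a i (p+1)) *
         ξ (Kf n p l b a i (p+1)) (Kf n p l b a i (p+1+1))
     else ξ (Kf n p l b a i (t+1)) (Kf n p l b a i (t+1+1)))
    = Function.update (Gf n p l b i ξ) p (ξ (Lf n l i p) a * ξ a b) t := by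
  rcases lt_trichotomy t p with h | rfl | h
  · rw [if_pos h, Function.update_of_ne (by omega), Kf_eq n p hp l b a i t (by omega),
      Kf_eq n p hp l b a i (t+1) (by omega), if_pos (by omega), if_pos (by omega)]
    simp only [Gf, if_pos h]
  · rw [if_neg (by omega), if_pos rfl, Function.update_self,
      Kf_eq n t hp l b a i t (by omega), Kf_eq n t hp l b a i (t+1) (by omega),
      Kf_eq n t hp l b a i (t+1+1) (by omega), if_pos le_rfl,
      if_neg (by omega), if_pos rfl, if_neg (by omega), if_neg (by omega), if_pos (by omega)]
  · rw [if_neg (by omega), if_neg (by omega), Function.update_of_ne (by omega),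
      Kf_eq n p hp l b a i (t+1) (by omega), Kf_eq n p hp l b a i (t+1+1) (by omega)]
    rcases eq_or_ne t (p+1) with rfl | h2
    · rw [if_neg (by omega), if_neg (by omega), if_pos (by omega)]
      simp only [Gf, if_neg (by omega : ¬ (p+1 < p)), if_neg (by omega : ¬ (p+1 = p)), if_pos rfl]
      rw [if_neg (by omega : ¬ (p+1+1+1 ≤ p)), if_neg (by omega : ¬ (p+1+1+1 = p+1)),
        if_neg (by omega : ¬ (p+1+1+1 = p+2)), if_true]
      congr 2
    · rw [if_neg (by omega), if_neg (by omega), if_neg (by omega),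
        if_neg (by omega), if_neg (by omega), if_neg (by omega)]
      simp only [Gf, if_neg (by omega : ¬ (t < p)), if_neg (by omega : ¬ (t = p)),
        if_neg h2]
      congr 2 <;> omega

theorem slot_eq' (n p : ℕ) (hp : p ≤ n) {ι A : Type} [Ring A] (ω : A)
    (l : Fin (n+1) → ι) (i : ι) (ξ : ι → ι → A) (t : ℕ) (ht : t ≤ n) :
    Function.update (Gf n p l (Lf n l i p) i ξ) p ω t
    = (if t < p then ξ (Lf n l i t) (Lf n l i (t+1))
       else if t = p then ω
       else ξ (Lf n l i (t-1)) (Lf n l i (t-1+1))) := by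
  rcases lt_trichotomy t p with h | rfl | h
  · rw [Function.update_of_ne (by omega), if_pos h]
    simp only [Gf, if_pos h]
  · rw [Function.update_self, if_neg (by omega : ¬ t < t), if_pos rfl]
  · rw [Function.update_of_ne (by omega), if_neg (by omega), if_neg (by omega)]
    rcases eq_or_ne t (p+1) with rfl | h2
    · simp only [Gf, if_neg (by omega : ¬ (p+1 < p)), if_neg (by omega : ¬ (p+1 = p)), if_pos rfl]
      congr 2 <;> omega
    · simp only [Gf, if_neg (by omega : ¬ (t < p)), if_neg (by omega : ¬ (t = p)), if_neg h2]
      congr 2 <;> omega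
end Aux

/-- **Level-wise form of the second structure identity for type `D`-structures.**
Let `R` be a commutative ring with `1 + 1 = 0`, let `(A, ω)` be a curved associative algebra
over `R`, let `ι` be a finite index set and let `ξ : ι × ι → A` satisfy the curvature equation
`∑ ℓ, ξ i ℓ * ξ ℓ j = ω δ_{ij}`.  Then for every `m ≥ 1` and all `i, j ∈ ι` the following
identity holds in `A^{⊗m}`: the sum over all sequences `i = k₀, k₁, …, k_{m+1} = j` in `ι`
and all positions `1 ≤ p ≤ m` of the `m`-factor tensors obtained from the `(m+1)`-factor
path tensor `ξ_{k₀k₁} ⊗ ⋯ ⊗ ξ_{k_m k_{m+1}}` by multiplying the two adjacent factors at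
position `p`, equals the sum over all sequences `i = ℓ₀, ℓ₁, …, ℓ_{m−1} = j` in `ι` and all
positions `0 ≤ q ≤ m−1` of the `m`-factor tensors obtained from the `(m−1)`-factor path
tensor `ξ_{ℓ₀ℓ₁} ⊗ ⋯ ⊗ ξ_{ℓ_{m−2}ℓ_{m−1}}` by inserting `ω` at position `q`.

Here a sequence `i = k₀, …, k_{m+1} = j` is encoded as a function `k : Fin (m+2) → ι`
(extended by junk to `ℕ`), whose boundary conditions are imposed by an indicator, and the
`m`-factor tensors live in `TS R A (m-1)`, whose factors are indexed from `0` (outermost)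
to `m-1` (innermost). -/
theorem D_structure_second_identity_coordinates
    (h2 : (1 : R) + 1 = 0)
    (A : Type) [Ring A] [Algebra R A]
    (ω : A) (hω : ∀ a : A, ω * a = a * ω)
    (ι : Type) [Fintype ι] [DecidableEq ι]
    (ξ : ι → ι → A)
    (hcurv : ∀ i j : ι, (∑ ℓ : ι, ξ i ℓ * ξ ℓ j) = if i = j then ω else 0)
    (m : ℕ) (hm : 1 ≤ m) (i j : ι) :
    (∑ k : Fin (m + 2) → ι, ∑ p : Fin m,
        (let K : ℕ → ι := fun t => if h : t < m + 2 then k ⟨t, h⟩ else i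
         let E : ℕ → A := fun t => ξ (K t) (K (t + 1))
         if K 0 = i ∧ K (m + 1) = j then
           pureT R A
             (fun q => if q < (p : ℕ) then E q
               else if q = (p : ℕ) then E (p : ℕ) * E ((p : ℕ) + 1) else E (q + 1))
             (m - 1)
         else 0))
    = (∑ l : Fin m → ι, ∑ q : Fin m,
        (let L : ℕ → ι := fun t => if h : t < m then l ⟨t, h⟩ else i
         let E' : ℕ → A := fun t => ξ (L t) (L (t + 1))
         if L 0 = i ∧ L (m - 1) = j then
           pureT R A
             (fun r => if r < (q : ℕ) then E' r
               else if r = (q : ℕ) then ω else E' (r - 1))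
             (m - 1)
         else 0)) := by
  obtain ⟨n, rfl⟩ : ∃ n, m = n + 1 := ⟨m - 1, by omega⟩
  clear hm h2
  simp only [show n+1+2 = n+3 from rfl, show n+1+1 = n+2 from rfl, Nat.add_sub_cancel]
  conv_lhs => rw [Finset.sum_comm]
  conv_rhs => rw [Finset.sum_comm]
  refine Finset.sum_congr rfl fun p _ => ?_
  have hp : (p : ℕ) ≤ n := by omega
  rw [← Equiv.sum_comp (backE n (p:ℕ) hp ι)]
  simp only [backE, Equiv.coe_fn_mk]
  rw [Fintype.sum_prod_type]
  refine Finset.sum_congr rfl fun l _ => ?_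
  rw [Fintype.sum_prod_type]
  dsimp only
  simp only [show ∀ (b a : ι) (t : ℕ), (if h : t < n+3 then backF n (p:ℕ) l b a ⟨t, h⟩ else i) = Kf n (p:ℕ) l b a i t from fun _ _ _ => rfl,
    show ∀ t : ℕ, (if h : t < n+1 then l ⟨t, h⟩ else i) = Lf n l i t from fun _ => rfl,
    Nat.add_sub_cancel]
  have hK0 : ∀ b a : ι, Kf n (p:ℕ) l b a i 0 = Lf n l i 0 := fun b a => by
    rw [Kf_eq n (p:ℕ) hp l b a i 0 (by omega), if_pos (Nat.zero_le _)]
  have hKn2 : ∀ b a : ι, Kf n (p:ℕ) l b a i (n+2) = (if (p:ℕ) = n then b else Lf n l i n) :=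
    fun b a => by
      rw [Kf_eq n (p:ℕ) hp l b a i (n+2) le_rfl]
      rcases eq_or_ne (p:ℕ) n with h | h
      · rw [if_neg (by omega), if_neg (by omega), if_pos (by omega), if_pos h]
      · rw [if_neg (by omega), if_neg (by omega), if_neg (by omega), if_neg h,
          Nat.add_sub_cancel]
  simp only [hK0, hKn2]
  trans (∑ b : ι,
      if Lf n l i 0 = i ∧ (if (p:ℕ) = n then b else Lf n l i n) = j then
        pureT R A (Function.update (Gf n (p:ℕ) l b i ξ) (p:ℕ)
          (if Lf n l i (p:ℕ) = b then ω else 0)) n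
      else 0)
  · refine Finset.sum_congr rfl fun b _ => ?_
    by_cases hC : (Lf n l i 0 = i ∧ (if (p:ℕ) = n then b else Lf n l i n) = j)
    · simp only [if_pos hC]
      rw [← hcurv (Lf n l i (p:ℕ)) b, ← pureT_sum univ n (p:ℕ) hp]
      exact Finset.sum_congr rfl fun a _ =>
        pureT_congr n (fun t ht => slot_eq n (p:ℕ) hp l b a i ξ t ht)
    · simp only [if_neg hC]
      exact Finset.sum_const_zero
  · have hside : ∀ b : ι, b ≠ Lf n l i (p:ℕ) →
        (if Lf n l i 0 = i ∧ (if (p:ℕ) = n then b else Lf n l i n) = j then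
          pureT R A (Function.update (Gf n (p:ℕ) l b i ξ) (p:ℕ)
            (if Lf n l i (p:ℕ) = b then ω else 0)) n
        else 0) = 0 := by
      intro b hb
      rw [if_neg (show ¬ (Lf n l i (p:ℕ) = b) from fun h => hb h.symm)]
      split_ifs <;>
        first
          | rfl
          | exact pureT_eq_zero n (p:ℕ) hp (Function.update_self _ _ _)
    rw [Fintype.sum_eq_single (Lf n l i (p:ℕ)) hside, if_pos rfl]
    have hifn : (if (p:ℕ) = n then Lf n l i (p:ℕ) else Lf n l i n) = Lf n l i n := by
      split_ifs with h
      · rw [h]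
      · rfl
    rw [hifn]
    split_ifs with hC
    · exact pureT_congr n (fun t ht => slot_eq' n (p:ℕ) hp ω l i ξ t ht)
    · rfl

end
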